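/- Fix n, m > 0 with n ≥ m and 0 < a₁ < a₂, and let F_{a_i} be the c.d.f. of Beta(n·a_i, m·a_i). Then there exists a unique x* ∈ (0,1) such that F_{a₁}(x) > F_{a₂}(x) for all x ∈ (0, x*) and F_{a₁}(x) < F_{a₂}(x) for all x ∈ (x*, 1). (That is, Beta(na₂, ma₂) is more bunched around x* than Beta(na₁, ma₁).) -/

import Mathlib

open Set MeasureTheory intervalIntegral Real

lemma aux_ii_left {p q : ℝ} (hp : -1 < p) :
    IntervalIntegrable (fun t : ℝ => t ^ p * (1 - t) ^ q) volume 0 (1/2) := by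
  apply IntervalIntegrable.mul_continuousOn
  · exact intervalIntegral.intervalIntegrable_rpow' hp
  · apply continuousOn_of_forall_continuousAt
    intro x hx
    rw [uIcc_of_le (by norm_num : (0:ℝ) ≤ 1/2)] at hx
    have : (1:ℝ) - x ≠ 0 := by
      have := hx.2; intro h; nlinarith
    exact (Real.continuousAt_rpow_const _ _ (Or.inl this)).comp
      ((continuous_const.sub continuous_id).continuousAt)

lemma aux_ii {p q : ℝ} (hp : -1 < p) (hq : -1 < q) :
    IntervalIntegrable (fun t : ℝ => t ^ p * (1 - t) ^ q) volume 0 1 := by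
  refine (aux_ii_left hp).trans ?_
  have h := ((aux_ii_left (p := q) (q := p) hq).comp_sub_left 1).symm
  norm_num at h
  have heq : (fun t : ℝ => t ^ p * (1 - t) ^ q)
      = fun x : ℝ => (1 - x) ^ q * x ^ p := by
    funext x; rw [mul_comm]
  rw [heq]
  exact h

lemma aux_ii_sub {p q x y : ℝ} (hp : -1 < p) (hq : -1 < q) (hx : 0 ≤ x) (hy : y ≤ 1)
    (hxy : x ≤ y) :
    IntervalIntegrable (fun t : ℝ => t ^ p * (1 - t) ^ q) volume x y :=
  (aux_ii hp hq).mono_set (by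
    rw [uIcc_of_le hxy, uIcc_of_le (by norm_num : (0:ℝ) ≤ 1)]
    exact Icc_subset_Icc hx hy)

lemma aux_f_pos {p q t : ℝ} (ht : t ∈ Ioo (0:ℝ) 1) : 0 < t ^ p * (1 - t) ^ q :=
  mul_pos (Real.rpow_pos_of_pos ht.1 _) (Real.rpow_pos_of_pos (by linarith [ht.2]) _)

lemma aux_int_pos {p q x y : ℝ} (hp : -1 < p) (hq : -1 < q) (hx : 0 ≤ x) (hy : y ≤ 1)
    (hxy : x < y) : 0 < ∫ t in x..y, t ^ p * (1 - t) ^ q := by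
  apply intervalIntegral.intervalIntegral_pos_of_pos_on
    (aux_ii_sub hp hq hx hy hxy.le)
  · intro t ht
    exact aux_f_pos ⟨lt_of_le_of_lt hx ht.1, lt_of_lt_of_le ht.2 hy⟩
  · exact hxy

lemma aux_f_contAt {p q t : ℝ} (ht : t ∈ Ioo (0:ℝ) 1) :
    ContinuousAt (fun t : ℝ => t ^ p * (1 - t) ^ q) t := by
  apply ContinuousAt.mul
  · exact Real.continuousAt_rpow_const _ _ (Or.inl ht.1.ne')
  · exact (Real.continuousAt_rpow_const _ _ (Or.inl (by linarith [ht.2] : (1:ℝ) - t ≠ 0))).comp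
      ((continuous_const.sub continuous_id).continuousAt)

lemma aux_f_contOn {p q : ℝ} : ContinuousOn (fun t : ℝ => t ^ p * (1 - t) ^ q) (Ioo 0 1) :=
  continuousOn_of_forall_continuousAt fun _ h => aux_f_contAt h

/-- FTC for the primitive. -/
lemma aux_hasDerivAt {p q x : ℝ} (hp : -1 < p) (hq : -1 < q) (hx : x ∈ Ioo (0:ℝ) 1) :
    HasDerivAt (fun u : ℝ => ∫ t in (0:ℝ)..u, t ^ p * (1 - t) ^ q)
      (x ^ p * (1 - x) ^ q) x := by
  apply intervalIntegral.integral_hasDerivAt_right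
    (aux_ii_sub hp hq le_rfl hx.2.le hx.1.le)
  · exact aux_f_contOn.stronglyMeasurableAtFilter isOpen_Ioo _ hx
  · exact aux_f_contAt hx

section Phi
variable {n m : ℝ} (hn : 0 < n) (hm : 0 < m)

lemma aux_phi_hasDerivAt {x : ℝ} (hx : x ∈ Ioo (0:ℝ) 1) :
    HasDerivAt (fun t : ℝ => n * Real.log t + m * Real.log (1 - t))
      (n / x - m / (1 - x)) x := by
  have h1 : HasDerivAt (fun t : ℝ => n * Real.log t) (n / x) x := by
    simpa [div_eq_mul_inv, mul_comm] using (Real.hasDerivAt_log hx.1.ne').const_mul n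
  have h2 : HasDerivAt (fun t : ℝ => Real.log (1 - t)) (-(1/(1-x))) x := by
    have := ((Real.hasDerivAt_log (by linarith [hx.2] : (1:ℝ) - x ≠ 0)).comp x
      ((hasDerivAt_id x).const_sub 1))
    simpa [div_eq_mul_inv, Function.comp_def] using this
  have h3 := h1.add (h2.const_mul m)
  have h4 : (n / x - m / (1 - x)) = n / x + m * -(1 / (1 - x)) := by ring
  rw [h4]
  exact h3

include hn hm in
lemma aux_phi_mono : StrictMonoOn (fun t : ℝ => n * Real.log t + m * Real.log (1 - t))
    (Ioc 0 (n/(n+m))) := by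
  have hp1 : n/(n+m) < 1 := by
    rw [div_lt_one (by linarith)]; linarith
  apply strictMonoOn_of_deriv_pos (convex_Ioc _ _)
  · apply continuousOn_of_forall_continuousAt
    intro x hx
    have hx1 : x ∈ Ioo (0:ℝ) 1 := ⟨hx.1, lt_of_le_of_lt hx.2 hp1⟩
    exact (aux_phi_hasDerivAt hx1).continuousAt
  · intro x hx
    rw [interior_Ioc] at hx
    have hx1 : x ∈ Ioo (0:ℝ) 1 := ⟨hx.1, lt_trans hx.2 hp1⟩
    rw [(aux_phi_hasDerivAt hx1).deriv]
    rw [sub_pos, div_lt_div_iff₀ (by linarith [hx1.2]) hx1.1]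
    have := hx.2
    rw [lt_div_iff₀ (by linarith : 0 < n + m)] at this
    nlinarith

include hn hm in
lemma aux_phi_anti : StrictAntiOn (fun t : ℝ => n * Real.log t + m * Real.log (1 - t))
    (Ico (n/(n+m)) 1) := by
  have hp0 : 0 < n/(n+m) := div_pos hn (by linarith)
  apply strictAntiOn_of_deriv_neg (convex_Ico _ _)
  · apply continuousOn_of_forall_continuousAt
    intro x hx
    have hx1 : x ∈ Ioo (0:ℝ) 1 := ⟨lt_of_lt_of_le hp0 hx.1, hx.2⟩
    exact (aux_phi_hasDerivAt hx1).continuousAt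
  · intro x hx
    rw [interior_Ico] at hx
    have hx1 : x ∈ Ioo (0:ℝ) 1 := ⟨lt_trans hp0 hx.1, hx.2⟩
    rw [(aux_phi_hasDerivAt hx1).deriv]
    rw [sub_neg, div_lt_div_iff₀ hx1.1 (by linarith [hx1.2])]
    have := hx.1
    rw [div_lt_iff₀ (by linarith : 0 < n + m)] at this
    nlinarith

end Phi

open Set MeasureTheory intervalIntegral Real

/-- Bunching for the restricted Beta family: for n ≥ m > 0 and 0 < a₁ < a₂ there is a
unique x* ∈ (0,1) with F_{a₁} > F_{a₂} on (0,x*) and F_{a₁} < F_{a₂} on (x*,1). -/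
theorem stmt_10 (n m a₁ a₂ : ℝ) (hm : 0 < m) (hnm : m ≤ n)
    (ha₁ : 0 < a₁) (ha : a₁ < a₂)
    (F : ℝ → ℝ → ℝ)
    (hF : ∀ a, ∀ x, F a x = (∫ t in (0:ℝ)..x, t ^ (n*a - 1) * (1 - t) ^ (m*a - 1))
        / (∫ t in (0:ℝ)..1, t ^ (n*a - 1) * (1 - t) ^ (m*a - 1))) :
    ∃! xstar : ℝ, xstar ∈ Set.Ioo (0:ℝ) 1 ∧
      (∀ x ∈ Set.Ioo (0:ℝ) xstar, F a₁ x > F a₂ x) ∧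
      (∀ x ∈ Set.Ioo xstar (1:ℝ), F a₁ x < F a₂ x) := by
  have hn : 0 < n := lt_of_lt_of_le hm hnm
  have ha₂ : 0 < a₂ := ha₁.trans ha
  have hδ : 0 < a₂ - a₁ := sub_pos.mpr ha
  have hpa : ∀ a : ℝ, 0 < a → -1 < n * a - 1 := fun a haa => by nlinarith
  have hqa : ∀ a : ℝ, 0 < a → -1 < m * a - 1 := fun a haa => by nlinarith
  set B₁ : ℝ := ∫ t in (0:ℝ)..1, t ^ (n * a₁ - 1) * (1 - t) ^ (m * a₁ - 1) with hB₁def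
  set B₂ : ℝ := ∫ t in (0:ℝ)..1, t ^ (n * a₂ - 1) * (1 - t) ^ (m * a₂ - 1) with hB₂def
  have hB₁ : 0 < B₁ := aux_int_pos (hpa _ ha₁) (hqa _ ha₁) le_rfl le_rfl one_pos
  have hB₂ : 0 < B₂ := aux_int_pos (hpa _ ha₂) (hqa _ ha₂) le_rfl le_rfl one_pos
  set G : ℝ → ℝ := fun x =>
    (∫ t in (0:ℝ)..x, t ^ (n * a₁ - 1) * (1 - t) ^ (m * a₁ - 1)) / B₁
    - (∫ t in (0:ℝ)..x, t ^ (n * a₂ - 1) * (1 - t) ^ (m * a₂ - 1)) / B₂ with hGdef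
  set g : ℝ → ℝ := fun x =>
    x ^ (n * a₁ - 1) * (1 - x) ^ (m * a₁ - 1) / B₁
    - x ^ (n * a₂ - 1) * (1 - x) ^ (m * a₂ - 1) / B₂ with hgdef
  set φ : ℝ → ℝ := fun t => n * Real.log t + m * Real.log (1 - t) with hφdef
  set K : ℝ := (Real.log B₂ - Real.log B₁) / (a₂ - a₁) with hKdef
  -- link with F
  have hFG : ∀ x, F a₁ x - F a₂ x = G x := by
    intro x
    rw [hF a₁ x, hF a₂ x, ← hB₁def, ← hB₂def]
  -- sign of g in terms of φ
  have hgiff : ∀ x ∈ Ioo (0:ℝ) 1, (0 < g x ↔ φ x < K) ∧ (g x < 0 ↔ K < φ x) := by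
    intro x hx
    have hx1 : (0:ℝ) < 1 - x := by linarith [hx.2]
    have hf₁ : 0 < x ^ (n * a₁ - 1) * (1 - x) ^ (m * a₁ - 1) := aux_f_pos hx
    have hf₂ : 0 < x ^ (n * a₂ - 1) * (1 - x) ^ (m * a₂ - 1) := aux_f_pos hx
    have hlog : ∀ a : ℝ, Real.log (x ^ (n * a - 1) * (1 - x) ^ (m * a - 1))
        = (n * a - 1) * Real.log x + (m * a - 1) * Real.log (1 - x) := by
      intro a
      rw [Real.log_mul (Real.rpow_pos_of_pos hx.1 _).ne' (Real.rpow_pos_of_pos hx1 _).ne',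
        Real.log_rpow hx.1, Real.log_rpow hx1]
    constructor
    · rw [hgdef]
      simp only
      rw [sub_pos, div_lt_div_iff₀ hB₂ hB₁,
        ← Real.log_lt_log_iff (mul_pos hf₂ hB₁) (mul_pos hf₁ hB₂),
        Real.log_mul hf₂.ne' hB₁.ne', Real.log_mul hf₁.ne' hB₂.ne', hlog, hlog,
        hKdef, hφdef]
      simp only
      rw [lt_div_iff₀ hδ]
      constructor <;> intro h <;> nlinarith [h]
    · rw [hgdef]
      simp only
      rw [sub_neg, div_lt_div_iff₀ hB₁ hB₂,
        ← Real.log_lt_log_iff (mul_pos hf₁ hB₂) (mul_pos hf₂ hB₁),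
        Real.log_mul hf₁.ne' hB₂.ne', Real.log_mul hf₂.ne' hB₁.ne', hlog, hlog,
        hKdef, hφdef]
      simp only
      rw [div_lt_iff₀ hδ]
      constructor <;> intro h <;> nlinarith [h]
  -- the mode
  set p : ℝ := n / (n + m) with hpdef
  have hp0 : 0 < p := div_pos hn (by linarith)
  have hp1 : p < 1 := by rw [hpdef, div_lt_one (by linarith)]; linarith
  have hpI : p ∈ Ioo (0:ℝ) 1 := ⟨hp0, hp1⟩
  -- continuity of φ on compact subintervals
  have hφcontOn : ∀ u v : ℝ, 0 < u → v < 1 → ContinuousOn φ (Icc u v) := by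
    intro u v hu hv
    apply continuousOn_of_forall_continuousAt
    intro x hx
    exact (aux_phi_hasDerivAt (n := n) (m := m)
      ⟨lt_of_lt_of_le hu hx.1, lt_of_le_of_lt hx.2 hv⟩).continuousAt
  -- integrability of g
  have hgint : ∀ x y : ℝ, 0 ≤ x → y ≤ 1 → x ≤ y → IntervalIntegrable g volume x y := by
    intro x y h1 h2 h3
    exact ((aux_ii_sub (hpa _ ha₁) (hqa _ ha₁) h1 h2 h3).div_const _).sub
      ((aux_ii_sub (hpa _ ha₂) (hqa _ ha₂) h1 h2 h3).div_const _)
  -- total integral of g is 0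
  have hint0 : (∫ x in (0:ℝ)..1, g x) = 0 := by
    rw [hgdef]
    rw [intervalIntegral.integral_sub
      ((aux_ii_sub (hpa _ ha₁) (hqa _ ha₁) le_rfl le_rfl zero_le_one).div_const _)
      ((aux_ii_sub (hpa _ ha₂) (hqa _ ha₂) le_rfl le_rfl zero_le_one).div_const _),
      intervalIntegral.integral_div, intervalIntegral.integral_div,
      ← hB₁def, ← hB₂def, div_self hB₁.ne', div_self hB₂.ne', sub_self]
  -- key: K < φ p
  have hKp : K < φ p := by
    by_contra hcon
    push_neg at hcon
    have hgpos : ∀ x ∈ Ioo (0:ℝ) 1, x ≠ p → 0 < g x := by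
      intro x hx hne
      apply (hgiff x hx).1.mpr
      rcases lt_or_gt_of_ne hne with h | h
      · exact lt_of_lt_of_le
          (aux_phi_mono hn hm ⟨hx.1, h.le⟩ ⟨hp0, le_rfl⟩ h) hcon
      · exact lt_of_lt_of_le
          (aux_phi_anti hn hm ⟨le_rfl, hp1⟩ ⟨h.le, hx.2⟩ h) hcon
    have hgp0 : 0 ≤ g p := by
      by_contra h
      push_neg at h
      exact absurd ((hgiff p hpI).2.mp h) (by linarith)
    have hsplit := intervalIntegral.integral_add_adjacent_intervals
      (hgint 0 p le_rfl hp1.le hp0.le) (hgint p 1 hp0.le le_rfl hp1.le)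
    have hpos1 : 0 < ∫ x in (0:ℝ)..p, g x := by
      apply intervalIntegral.intervalIntegral_pos_of_pos_on
        (hgint 0 p le_rfl hp1.le hp0.le)
      · exact fun x hx => hgpos x ⟨hx.1, hx.2.trans hp1⟩ (ne_of_lt hx.2)
      · exact hp0
    have hpos2 : 0 ≤ ∫ x in p..(1:ℝ), g x := by
      apply intervalIntegral.integral_nonneg_of_ae_restrict hp1.le
      have hne : ∀ᵐ (x : ℝ) ∂volume, x ≠ 1 := by
        rw [MeasureTheory.ae_iff]
        simpa [Set.setOf_eq_eq_singleton] using measure_singleton (1:ℝ)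
      have hmem : ∀ᵐ (x : ℝ) ∂(volume.restrict (Icc p (1:ℝ))), x ∈ Icc p (1:ℝ) :=
        MeasureTheory.ae_restrict_mem measurableSet_Icc
      filter_upwards [MeasureTheory.ae_restrict_of_ae hne, hmem] with x hx1 hx2
      rcases eq_or_lt_of_le hx2.1 with h | h
      · rw [← h]; exact hgp0
      · exact (hgpos x ⟨hp0.trans h, lt_of_le_of_ne hx2.2 hx1⟩ (ne_of_gt h)).le
    linarith
  -- crossing point t₁ on the left
  obtain ⟨t₁, ht₁, hφt₁⟩ : ∃ t₁ ∈ Ioo (min (p/2) (Real.exp (K/n)/2)) p, φ t₁ = K := by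
    set c : ℝ := min (p/2) (Real.exp (K/n)/2) with hcdef
    have hc0 : 0 < c := lt_min (by linarith) (by positivity)
    have hcp : c < p := lt_of_le_of_lt (min_le_left _ _) (by linarith)
    have hφc : φ c < K := by
      have h1 : Real.log c < K / n := by
        have hce : c < Real.exp (K/n) :=
          lt_of_le_of_lt (min_le_right _ _) (by linarith [Real.exp_pos (K/n)])
        calc Real.log c < Real.log (Real.exp (K/n)) := Real.log_lt_log hc0 hce
          _ = K / n := Real.log_exp _
      have hkn : K / n * n = K := div_mul_cancel₀ K hn.ne'
      have h1' : n * Real.log c < K := by nlinarith [h1]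
      have h2 : Real.log (1 - c) ≤ 0 := Real.log_nonpos (by linarith) (by linarith)
      have h3 : m * Real.log (1 - c) ≤ 0 := mul_nonpos_of_nonneg_of_nonpos hm.le h2
      rw [hφdef]; simp only; linarith
    exact intermediate_value_Ioo hcp.le (hφcontOn c p hc0 hp1) ⟨hφc, hKp⟩
  -- crossing point t₂ on the right
  obtain ⟨t₂, ht₂, hφt₂⟩ : ∃ t₂ ∈ Ioo p (max ((p+1)/2) (1 - Real.exp (K/m)/2)), φ t₂ = K := by
    set d : ℝ := max ((p+1)/2) (1 - Real.exp (K/m)/2) with hddef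
    have hd1 : d < 1 := max_lt (by linarith) (by linarith [Real.exp_pos (K/m)])
    have hpd : p < d := lt_of_lt_of_le (by linarith) (le_max_left _ _)
    have hd0 : 0 < d := hp0.trans hpd
    have hφd : φ d < K := by
      have h1 : Real.log (1 - d) < K / m := by
        have h1d : (0:ℝ) < 1 - d := by linarith
        have hde : 1 - d < Real.exp (K/m) := by
          have := le_max_right ((p+1)/2) (1 - Real.exp (K/m)/2)
          have he := Real.exp_pos (K/m)
          linarith
        calc Real.log (1 - d) < Real.log (Real.exp (K/m)) := Real.log_lt_log h1d hde
          _ = K / m := Real.log_exp _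
      have hkm : K / m * m = K := div_mul_cancel₀ K hm.ne'
      have h1' : m * Real.log (1 - d) < K := by nlinarith [h1]
      have h2 : Real.log d ≤ 0 := Real.log_nonpos hd0.le hd1.le
      have h3 : n * Real.log d ≤ 0 := mul_nonpos_of_nonneg_of_nonpos hn.le h2
      rw [hφdef]; simp only; linarith
    exact intermediate_value_Ioo' hpd.le (hφcontOn p d hp0 hd1) ⟨hφd, hKp⟩
  have ht₁0 : 0 < t₁ := lt_trans (lt_min (by linarith) (by positivity)) ht₁.1
  have ht₁p : t₁ < p := ht₁.2
  have ht₂p : p < t₂ := ht₂.1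
  have ht₂1 : t₂ < 1 := lt_trans ht₂.2
    (max_lt (by linarith) (by linarith [Real.exp_pos (K/m)]))
  have ht₁I : t₁ ∈ Ioo (0:ℝ) 1 := ⟨ht₁0, lt_trans ht₁p hp1⟩
  have ht₂I : t₂ ∈ Ioo (0:ℝ) 1 := ⟨hp0.trans ht₂p, ht₂1⟩
  -- sign of g on the three intervals
  have hg1 : ∀ x ∈ Ioo (0:ℝ) t₁, 0 < g x := by
    intro x hx
    refine (hgiff x ⟨hx.1, lt_trans hx.2 ht₁I.2⟩).1.mpr ?_
    rw [← hφt₁]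
    exact aux_phi_mono hn hm ⟨hx.1, (hx.2.trans ht₁p).le⟩ ⟨ht₁0, ht₁p.le⟩ hx.2
  have hg2 : ∀ x ∈ Ioo t₁ t₂, g x < 0 := by
    intro x hx
    refine (hgiff x ⟨ht₁0.trans hx.1, lt_trans hx.2 ht₂1⟩).2.mpr ?_
    rcases le_or_gt x p with h | h
    · rw [← hφt₁]
      exact aux_phi_mono hn hm ⟨ht₁0, ht₁p.le⟩ ⟨ht₁0.trans hx.1, h⟩ hx.1
    · rw [← hφt₂]
      exact aux_phi_anti hn hm ⟨h.le, lt_trans hx.2 ht₂1⟩ ⟨ht₂p.le, ht₂1⟩ hx.2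
  have hg3 : ∀ x ∈ Ioo t₂ (1:ℝ), 0 < g x := by
    intro x hx
    refine (hgiff x ⟨ht₂I.1.trans hx.1, hx.2⟩).1.mpr ?_
    rw [← hφt₂]
    exact aux_phi_anti hn hm ⟨ht₂p.le, ht₂1⟩ ⟨ht₂p.le.trans hx.1.le, hx.2⟩ hx.1
  -- derivative and continuity of G
  have hGder : ∀ x ∈ Ioo (0:ℝ) 1, HasDerivAt G (g x) x := by
    intro x hx
    exact ((aux_hasDerivAt (hpa _ ha₁) (hqa _ ha₁) hx).div_const B₁).sub
      ((aux_hasDerivAt (hpa _ ha₂) (hqa _ ha₂) hx).div_const B₂)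
  have hGcont : ContinuousOn G (Icc (0:ℝ) 1) := by
    have h1 := intervalIntegral.continuousOn_primitive_interval'
      (aux_ii (hpa _ ha₁) (hqa _ ha₁)) (left_mem_uIcc (a := (0:ℝ)) (b := 1))
    have h2 := intervalIntegral.continuousOn_primitive_interval'
      (aux_ii (hpa _ ha₂) (hqa _ ha₂)) (left_mem_uIcc (a := (0:ℝ)) (b := 1))
    rw [uIcc_of_le zero_le_one] at h1 h2
    exact (h1.div_const _).sub (h2.div_const _)
  have hG0 : G 0 = 0 := by
    rw [hGdef]
    simp [intervalIntegral.integral_same]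
  have hG1 : G 1 = 0 := by
    rw [hGdef]
    simp only
    rw [← hB₁def, ← hB₂def, div_self hB₁.ne', div_self hB₂.ne', sub_self]
  -- monotonicity of G on the three intervals
  have hmono1 : StrictMonoOn G (Icc (0:ℝ) t₁) := by
    apply strictMonoOn_of_deriv_pos (convex_Icc _ _)
      (hGcont.mono (Icc_subset_Icc le_rfl ht₁I.2.le))
    intro x hx
    rw [interior_Icc] at hx
    rw [(hGder x ⟨hx.1, lt_trans hx.2 ht₁I.2⟩).deriv]
    exact hg1 x hx
  have hanti : StrictAntiOn G (Icc t₁ t₂) := by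
    apply strictAntiOn_of_deriv_neg (convex_Icc _ _)
      (hGcont.mono (Icc_subset_Icc ht₁0.le ht₂1.le))
    intro x hx
    rw [interior_Icc] at hx
    rw [(hGder x ⟨ht₁0.trans hx.1, lt_trans hx.2 ht₂1⟩).deriv]
    exact hg2 x hx
  have hmono2 : StrictMonoOn G (Icc t₂ (1:ℝ)) := by
    apply strictMonoOn_of_deriv_pos (convex_Icc _ _)
      (hGcont.mono (Icc_subset_Icc ht₂I.1.le le_rfl))
    intro x hx
    rw [interior_Icc] at hx
    rw [(hGder x ⟨ht₂I.1.trans hx.1, hx.2⟩).deriv]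
    exact hg3 x hx
  have hGt₁ : 0 < G t₁ := by
    have := hmono1 ⟨le_rfl, ht₁0.le⟩ ⟨ht₁0.le, le_rfl⟩ ht₁0
    rwa [hG0] at this
  have hGt₂ : G t₂ < 0 := by
    have := hmono2 ⟨le_rfl, ht₂1.le⟩ ⟨ht₂1.le, le_rfl⟩ ht₂1
    rwa [hG1] at this
  have ht₁₂ : t₁ < t₂ := lt_trans ht₁p ht₂p
  -- the crossing point of G
  obtain ⟨xs, hxs, hGxs⟩ : ∃ xs ∈ Ioo t₁ t₂, G xs = 0 := by
    exact intermediate_value_Ioo' ht₁₂.le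
      (hGcont.mono (Icc_subset_Icc ht₁0.le ht₂1.le)) ⟨hGt₂, hGt₁⟩
  have hxsI : xs ∈ Ioo (0:ℝ) 1 := ⟨ht₁0.trans hxs.1, lt_trans hxs.2 ht₂1⟩
  -- G > 0 on (0, xs), G < 0 on (xs, 1)
  have hGpos : ∀ x ∈ Ioo (0:ℝ) xs, 0 < G x := by
    intro x hx
    rcases le_or_gt x t₁ with h | h
    · have := hmono1 ⟨le_rfl, ht₁0.le⟩ ⟨hx.1.le, h⟩ hx.1
      rwa [hG0] at this
    · have := hanti ⟨h.le, (hx.2.trans hxs.2).le⟩ ⟨hxs.1.le, hxs.2.le⟩ hx.2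
      rwa [hGxs] at this
  have hGneg : ∀ x ∈ Ioo xs (1:ℝ), G x < 0 := by
    intro x hx
    rcases le_or_gt x t₂ with h | h
    · have := hanti ⟨hxs.1.le, hxs.2.le⟩ ⟨(hxs.1.trans hx.1).le, h⟩ hx.1
      rwa [hGxs] at this
    · have := hmono2 ⟨h.le, hx.2.le⟩ ⟨ht₂1.le, le_rfl⟩ hx.2
      rwa [hG1] at this
  -- conclusion
  refine ⟨xs, ⟨hxsI, ?_, ?_⟩, ?_⟩
  · intro x hx
    have := hGpos x hx
    rw [← hFG x] at this
    linarith
  · intro x hx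
    have := hGneg x hx
    rw [← hFG x] at this
    linarith
  · rintro y ⟨hyI, hy1, hy2⟩
    by_contra hne
    rcases lt_or_gt_of_ne hne with h | h
    · set z : ℝ := (y + xs) / 2 with hzdef
      have hz1 : y < z := by rw [hzdef]; linarith
      have hz2 : z < xs := by rw [hzdef]; linarith
      have hzI1 : z ∈ Ioo y (1:ℝ) := ⟨hz1, lt_trans hz2 hxsI.2⟩
      have hzI2 : z ∈ Ioo (0:ℝ) xs := ⟨lt_trans hyI.1 hz1, hz2⟩
      have h1 := hy2 z hzI1
      have h2 := hGpos z hzI2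
      rw [← hFG z] at h2
      linarith
    · set z : ℝ := (xs + y) / 2 with hzdef
      have hz1 : xs < z := by rw [hzdef]; linarith
      have hz2 : z < y := by rw [hzdef]; linarith
      have hzI1 : z ∈ Ioo (0:ℝ) y := ⟨lt_trans hxsI.1 hz1, hz2⟩
      have hzI2 : z ∈ Ioo xs (1:ℝ) := ⟨hz1, lt_trans hz2 hyI.2⟩
      have h1 := hy1 z hzI1
      have h2 := hGneg z hzI2
      rw [← hFG z] at h2
      linarith
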